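/- Let (X,d) be a complete metric space, n ≥ 1 a fixed integer, and for each k ∈ ℕ let {f_{i,k} : i = 1,…,n} be contractions on X. Suppose there exists a nonempty compact set 𝓘 ⊆ X with f_{i,k}(𝓘) ⊆ 𝓘 for all i and k, and that for each i, the sequence {f_{i,k}}_{k∈ℕ} converges uniformly on 𝓘 to a map f_i as k → ∞, where each f_i : X → X is a contraction with contraction factor c_i < 1. Let A be the unique attractor of the contractive IFS (X, {f_1,…,f_n}), i.e. the unique nonempty compact set with A = ⋃_{i=1}^n f_i(A). Then for every nonempty compact set A_0 ⊆ 𝓘, the forward trajectories Φ_k(A_0) := 𝓕_k ∘ 𝓕_{k-1} ∘ ⋯ ∘ 𝓕_1 (A_0) converge to A in the Hausdorff distance as k → ∞, where 𝓕_k(S) := ⋃_{i=1}^n f_{i,k}(S). -/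

import Mathlib

open Filter Topology

/-- Forward trajectory of a sequence of self-maps:
`forwardTraj T k = T (k-1) ∘ ⋯ ∘ T 1 ∘ T 0`. -/
def forwardTraj {α : Type*} (T : ℕ → α → α) : ℕ → α → α
  | 0 => id
  | k + 1 => fun a => T k (forwardTraj T k a)

open EMetric Set in
/-- Hausdorff edistance of a union is at most the sup of Hausdorff edistances. -/
lemma hausdorffEdist_iUnion_le {X : Type*} [PseudoEMetricSpace X] {ι : Type*}
    (s t : ι → Set X) :
    hausdorffEdist (⋃ i, s i) (⋃ i, t i) ≤ ⨆ i, hausdorffEdist (s i) (t i) := by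
  apply hausdorffEdist_le_of_infEdist
  · intro x hx
    obtain ⟨i, hi⟩ := Set.mem_iUnion.1 hx
    calc infEdist x (⋃ i, t i) ≤ infEdist x (t i) :=
          infEdist_anti (Set.subset_iUnion t i)
      _ ≤ hausdorffEdist (s i) (t i) := infEdist_le_hausdorffEdist_of_mem hi
      _ ≤ ⨆ i, hausdorffEdist (s i) (t i) := le_iSup (fun i => hausdorffEdist (s i) (t i)) i
  · intro x hx
    obtain ⟨i, hi⟩ := Set.mem_iUnion.1 hx
    calc infEdist x (⋃ i, s i) ≤ infEdist x (s i) :=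
          infEdist_anti (Set.subset_iUnion s i)
      _ ≤ hausdorffEdist (s i) (t i) := by
          rw [EMetric.hausdorffEdist, hausdorffEdist_comm]; exact infEdist_le_hausdorffEdist_of_mem hi
      _ ≤ ⨆ i, hausdorffEdist (s i) (t i) := le_iSup (fun i => hausdorffEdist (s i) (t i)) i

open EMetric in
/-- Lipschitz image contracts the Hausdorff edistance (for compact nonempty sets). -/
lemma hausdorffEdist_image_le {X : Type*} [EMetricSpace X] {K : NNReal} {h : X → X}
    (hh : LipschitzWith K h) {s t : Set X} (hs : IsCompact s) (hsne : s.Nonempty)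
    (ht : IsCompact t) (htne : t.Nonempty) :
    hausdorffEdist (h '' s) (h '' t) ≤ K * hausdorffEdist s t := by
  have key : ∀ (u v : Set X), IsCompact v → v.Nonempty → ∀ x ∈ u,
      infEdist (h x) (h '' v) ≤ K * hausdorffEdist u v := by
    intro u v hv hvne x hx
    obtain ⟨y, hy, hxy⟩ := hv.exists_infEdist_eq_edist hvne x
    calc infEdist (h x) (h '' v) ≤ edist (h x) (h y) :=
          infEdist_le_edist_of_mem (Set.mem_image_of_mem h hy)
      _ ≤ K * edist x y := hh x y
      _ = K * infEdist x v := by rw [EMetric.infEdist, hxy]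
      _ ≤ K * hausdorffEdist u v :=
          mul_le_mul_right (infEdist_le_hausdorffEdist_of_mem hx) _
  apply hausdorffEdist_le_of_infEdist
  · rintro _ ⟨x, hx, rfl⟩
    exact key s t ht htne x hx
  · rintro _ ⟨x, hx, rfl⟩
    calc infEdist (h x) (h '' s) ≤ K * hausdorffEdist t s := key t s hs hsne x hx
      _ = K * hausdorffEdist s t := by rw [EMetric.hausdorffEdist, hausdorffEdist_comm]

open EMetric in
lemma hausdorffEdist_le_diam_of_subset {X : Type*} [PseudoEMetricSpace X]
    {s t u : Set X} (hsu : s ⊆ u) (htu : t ⊆ u) (hsne : s.Nonempty) (htne : t.Nonempty) :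
    hausdorffEdist s t ≤ EMetric.diam u := by
  apply hausdorffEdist_le_of_mem_edist
  · intro x hx
    obtain ⟨y, hy⟩ := htne
    exact ⟨y, hy, edist_le_diam_of_mem (hsu hx) (htu hy)⟩
  · intro x hx
    obtain ⟨y, hy⟩ := hsne
    exact ⟨y, hy, edist_le_diam_of_mem (htu hx) (hsu hy)⟩

/-- A nonnegative real sequence satisfying an eventual contraction-plus-error recursion
tends to zero. -/
lemma tendsto_zero_of_step (u : ℕ → ℝ) (hu0 : ∀ k, 0 ≤ u k) (c : ℝ) (hc0 : 0 ≤ c)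
    (hc1 : c < 1) (h : ∀ ε > 0, ∃ K, ∀ k ≥ K, u (k + 1) ≤ c * u k + ε) :
    Tendsto u atTop (𝓝 0) := by
  rw [Metric.tendsto_atTop]
  intro ε' hε'
  have h1c : 0 < 1 - c := by linarith
  set ε := ε' * (1 - c) / 2 with hεdef
  have hεpos : 0 < ε := by positivity
  obtain ⟨K, hK⟩ := h ε hεpos
  have key : ∀ m, u (K + m) ≤ c ^ m * u K + ε / (1 - c) := by
    intro m
    induction m with
    | zero => simp [le_of_lt, div_pos hεpos h1c, hu0]
    | succ m ih =>
      have step : u (K + m + 1) ≤ c * u (K + m) + ε := hK (K + m) (Nat.le_add_right K m)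
      have : c * u (K + m) ≤ c * (c ^ m * u K + ε / (1 - c)) :=
        mul_le_mul_of_nonneg_left ih hc0
      have hfield : c * (ε / (1 - c)) + ε = ε / (1 - c) := by
        field_simp
        ring
      calc u (K + (m + 1)) = u (K + m + 1) := by ring_nf
        _ ≤ c * u (K + m) + ε := step
        _ ≤ c * (c ^ m * u K + ε / (1 - c)) + ε := by linarith
        _ = c ^ (m + 1) * u K + (c * (ε / (1 - c)) + ε) := by ring
        _ = c ^ (m + 1) * u K + ε / (1 - c) := by rw [hfield]
  have hεhalf : ε / (1 - c) = ε' / 2 := by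
    rw [hεdef]; field_simp
  have hpow : Tendsto (fun m => c ^ m * u K) atTop (𝓝 0) := by
    simpa using (tendsto_pow_atTop_nhds_zero_of_abs_lt_one
      (by rwa [abs_of_nonneg hc0])).mul_const (u K)
  have hev : ∀ᶠ m in atTop, c ^ m * u K < ε' / 2 := by
    have := hpow.eventually (eventually_lt_nhds (show (0:ℝ) < ε' / 2 by linarith))
    simpa using this
  obtain ⟨M, hM⟩ := hev.exists_forall_of_atTop
  refine ⟨K + M, fun k hk => ?_⟩
  have hkK : K ≤ k := le_trans (Nat.le_add_right K M) hk
  obtain ⟨m, rfl⟩ := Nat.exists_eq_add_of_le hkK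
  have hmM : M ≤ m := by omega
  have := key m
  have hlt : c ^ m * u K < ε' / 2 := hM m hmM
  rw [Real.dist_eq, sub_zero, abs_of_nonneg (hu0 _)]
  calc u (K + m) ≤ c ^ m * u K + ε / (1 - c) := this
    _ < ε' / 2 + ε' / 2 := by rw [hεhalf]; linarith
    _ = ε' := by ring

/-- If the contractions `f_{i,k}` (with a fixed number `n` of maps) leave a
nonempty compact set `𝓘` invariant and converge uniformly on `𝓘` to contractions `f_i` as
`k → ∞`, then the forward trajectories of the Hutchinson maps of the families
`{f_{i,k} : i}` converge in the Hausdorff distance, for every nonempty compact `A₀ ⊆ 𝓘`,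
to the attractor `A` of the limit IFS `{f_1, …, f_n}`. -/
theorem forward_hutchinson_tendsto_attractor {X : Type*} [MetricSpace X] [CompleteSpace X]
    (n : ℕ) (hn : 0 < n) (f : ℕ → Fin n → X → X)
    (hf : ∀ k i, ∃ c : NNReal, c < 1 ∧ LipschitzWith c (f k i))
    (I : Set X) (hne : I.Nonempty) (hcpt : IsCompact I)
    (hinv : ∀ k i, Set.MapsTo (f k i) I I)
    (g : Fin n → X → X) (c : Fin n → NNReal) (hc : ∀ i, c i < 1)
    (hg : ∀ i, LipschitzWith (c i) (g i))
    (hconv : ∀ i, TendstoUniformlyOn (fun k => f k i) (g i) atTop I)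
    (A : Set X) (hA : A.Nonempty) (hAc : IsCompact A) (hAfix : A = ⋃ i, g i '' A) :
    ∀ A₀ : Set X, A₀ ⊆ I → A₀.Nonempty → IsCompact A₀ →
      Tendsto (fun k => Metric.hausdorffDist
        (forwardTraj (fun k S => ⋃ i, f k i '' S) k A₀) A) atTop (𝓝 0) := by
  intro A₀ hA₀I hA₀ne hA₀c
  haveI : Nonempty (Fin n) := ⟨⟨0, hn⟩⟩
  -- the uniform contraction constant
  set C : NNReal := Finset.univ.sup c with hCdef
  have hcC : ∀ i, c i ≤ C := fun i => Finset.le_sup (Finset.mem_univ i)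
  have hC1 : C < 1 := by
    rw [hCdef, Finset.sup_lt_iff (by norm_num : (0 : NNReal) < 1)]
    exact fun i _ => hc i
  have hgC : ∀ i, LipschitzWith C (g i) := fun i => (hg i).weaken (hcC i)
  -- trajectory properties
  set Φ : ℕ → Set X := fun k => forwardTraj (fun k S => ⋃ i, f k i '' S) k A₀ with hΦdef
  have hΦrec : ∀ k, Φ (k + 1) = ⋃ i, f k i '' Φ k := fun k => rfl
  have hΦ : ∀ k, Φ k ⊆ I ∧ (Φ k).Nonempty ∧ IsCompact (Φ k) := by
    intro k
    induction k with
    | zero => exact ⟨hA₀I, hA₀ne, hA₀c⟩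
    | succ k ih =>
      obtain ⟨hsub, hne', hcpt'⟩ := ih
      refine ⟨?_, ?_, ?_⟩
      · rw [hΦrec]
        exact Set.iUnion_subset fun i => (Set.image_subset_iff.2
          fun x hx => (hinv k i) (hsub hx))
      · rw [hΦrec]
        obtain ⟨x, hx⟩ := hne'
        exact ⟨f k (Classical.arbitrary _) x, Set.mem_iUnion.2
          ⟨Classical.arbitrary _, Set.mem_image_of_mem _ hx⟩⟩
      · rw [hΦrec]
        apply isCompact_iUnion
        intro i
        obtain ⟨c', _, hlip⟩ := hf k i
        exact hcpt'.image hlip.continuous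
  -- the edist sequence
  set d : ℕ → ENNReal := fun k => EMetric.hausdorffEdist (Φ k) A with hd_def
  have hIA_bdd : EMetric.diam (I ∪ A) ≠ ⊤ :=
    Metric.isBounded_iff_ediam_ne_top.1 (hcpt.union hAc).isBounded
  have hdM : ∀ k, d k ≤ EMetric.diam (I ∪ A) := fun k =>
    hausdorffEdist_le_diam_of_subset ((hΦ k).1.trans Set.subset_union_left)
      Set.subset_union_right (hΦ k).2.1 hA
  have hdfin : ∀ k, d k ≠ ⊤ := fun k => ne_top_of_le_ne_top hIA_bdd (hdM k)
  -- the one-step estimate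
  have step : ∀ ε : ℝ, 0 < ε → ∃ K, ∀ k ≥ K,
      d (k + 1) ≤ C * d k + ENNReal.ofReal ε := by
    intro ε hε
    have hev : ∀ᶠ k in atTop, ∀ i, ∀ x ∈ I, dist (g i x) (f k i x) < ε := by
      rw [eventually_all]
      intro i
      exact (Metric.tendstoUniformlyOn_iff.1 (hconv i)) ε hε
    obtain ⟨K, hK⟩ := hev.exists_forall_of_atTop
    refine ⟨K, fun k hk => ?_⟩
    obtain ⟨hsub, hne', hcpt'⟩ := hΦ k
    -- first: hausdorffEdist (⋃ f k i '' Φ k) (⋃ g i '' Φ k) ≤ ofReal ε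
    have h1 : EMetric.hausdorffEdist (⋃ i, f k i '' Φ k) (⋃ i, g i '' Φ k) ≤
        ENNReal.ofReal ε := by
      apply EMetric.hausdorffEdist_le_of_mem_edist
      · rintro z hz
        obtain ⟨i, x, hx, rfl⟩ := by simpa using hz
        refine ⟨g i x, Set.mem_iUnion.2 ⟨i, Set.mem_image_of_mem _ hx⟩, ?_⟩
        rw [edist_comm, edist_le_ofReal hε.le]
        exact (hK k hk i x (hsub hx)).le
      · rintro z hz
        obtain ⟨i, x, hx, rfl⟩ := by simpa using hz
        refine ⟨f k i x, Set.mem_iUnion.2 ⟨i, Set.mem_image_of_mem _ hx⟩, ?_⟩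
        rw [edist_le_ofReal hε.le]
        exact (hK k hk i x (hsub hx)).le
    -- second: hausdorffEdist (⋃ g i '' Φ k) A ≤ C * d k
    have h2 : EMetric.hausdorffEdist (⋃ i, g i '' Φ k) A ≤ C * d k := by
      conv_lhs => rw [hAfix]
      refine le_trans (hausdorffEdist_iUnion_le _ _) (iSup_le fun i => ?_)
      exact hausdorffEdist_image_le (hgC i) hcpt' hne' hAc hA
    calc d (k + 1) = EMetric.hausdorffEdist (⋃ i, f k i '' Φ k) A := rfl
      _ ≤ EMetric.hausdorffEdist (⋃ i, f k i '' Φ k) (⋃ i, g i '' Φ k) +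
          EMetric.hausdorffEdist (⋃ i, g i '' Φ k) A :=
          EMetric.hausdorffEdist_triangle
      _ ≤ ENNReal.ofReal ε + C * d k := add_le_add h1 h2
      _ = C * d k + ENNReal.ofReal ε := add_comm _ _
  -- pass to real numbers
  set u : ℕ → ℝ := fun k => (d k).toReal with hu_def
  have hu0 : ∀ k, 0 ≤ u k := fun k => ENNReal.toReal_nonneg
  have hstep_real : ∀ ε > 0, ∃ K, ∀ k ≥ K, u (k + 1) ≤ (C : ℝ) * u k + ε := by
    intro ε hε
    obtain ⟨K, hK⟩ := step ε hε
    refine ⟨K, fun k hk => ?_⟩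
    have hrhs_fin : (C : ENNReal) * d k + ENNReal.ofReal ε ≠ ⊤ := by
      apply ENNReal.add_ne_top.2
      exact ⟨ENNReal.mul_ne_top ENNReal.coe_ne_top (hdfin k), ENNReal.ofReal_ne_top⟩
    have := ENNReal.toReal_mono hrhs_fin (hK k hk)
    rwa [ENNReal.toReal_add (ENNReal.mul_ne_top ENNReal.coe_ne_top (hdfin k))
      ENNReal.ofReal_ne_top, ENNReal.toReal_mul, ENNReal.coe_toReal,
      ENNReal.toReal_ofReal hε.le] at this
  have hu_tendsto : Tendsto u atTop (𝓝 0) :=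
    tendsto_zero_of_step u hu0 (C : ℝ) C.coe_nonneg
      (by exact_mod_cast hC1) hstep_real
  have : (fun k => Metric.hausdorffDist (Φ k) A) = u := by
    funext k
    rfl
  simpa [hΦdef] using this ▸ hu_tendsto
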